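/- Let 𝓑 be a family of pairwise disjoint projection bands in a Banach lattice X whose linear span is norm dense in X. Then a net x_α un-converges to x in X if and only if P_B x_α un-converges to P_B x in B for every B ∈ 𝓑. -/

import Mathlib

open Filter Topology

set_option linter.unusedSectionVars false
set_option maxHeartbeats 1000000

/-- A net `f` un-converges to `x` if `‖|f i - x| ⊓ u‖ → 0` for every `u ≥ 0`. -/
def UnTendsto {ι X : Type*} [NormedAddCommGroup X] [Lattice X] [HasSolidNorm X]
    [IsOrderedAddMonoid X]
    (f : ι → X) (l : Filter ι) (x : X) : Prop :=
  ∀ u : X, 0 ≤ u → Tendsto (fun i => ‖|f i - x| ⊓ u‖) l (𝓝 0)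

section Aux
variable {X : Type*} [NormedAddCommGroup X] [Lattice X] [HasSolidNorm X] [IsOrderedAddMonoid X]
    [NormedSpace ℝ X]

private lemma norm_mono_nonneg {a b : X} (ha : 0 ≤ a) (hab : a ≤ b) : ‖a‖ ≤ ‖b‖ :=
  norm_le_norm_of_abs_le_abs (by rwa [abs_of_nonneg ha, abs_of_nonneg (ha.trans hab)])

private lemma q_mono (Q : X →ₗ[ℝ] X) (hp : ∀ x : X, 0 ≤ x → 0 ≤ Q x ∧ Q x ≤ x)
    {y z : X} (h : y ≤ z) : Q y ≤ Q z := by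
  have h1 := (hp (z - y) (sub_nonneg.2 h)).1
  rw [map_sub] at h1
  exact sub_nonneg.1 h1

private lemma q_comp_mono (Q : X →ₗ[ℝ] X) (hp : ∀ x : X, 0 ≤ x → 0 ≤ Q x ∧ Q x ≤ x)
    {y z : X} (h : y ≤ z) : y - Q y ≤ z - Q z := by
  have h1 := (hp (z - y) (sub_nonneg.2 h)).2
  rw [map_sub] at h1
  have h3 : 0 ≤ (z - Q z) - (y - Q y) := by
    calc (0:X) ≤ z - y - (Q z - Q y) := sub_nonneg.2 h1
      _ = (z - Q z) - (y - Q y) := by abel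
  exact sub_nonneg.1 h3

private lemma q_ideal (Q : X →ₗ[ℝ] X) (hp : ∀ x : X, 0 ≤ x → 0 ≤ Q x ∧ Q x ≤ x)
    {t v : X} (ht : 0 ≤ t) (htv : t ≤ v) (hv : Q v = v) : Q t = t := by
  have h1 : t - Q t ≤ v - Q v := q_comp_mono Q hp htv
  rw [hv, sub_self] at h1
  exact le_antisymm (hp t ht).2 (sub_nonpos.1 h1)

private lemma q_compl_disj (Q : X →ₗ[ℝ] X) (hi : Q ∘ₗ Q = Q)
    (hp : ∀ x : X, 0 ≤ x → 0 ≤ Q x ∧ Q x ≤ x)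
    {a v : X} (ha : 0 ≤ a) (hv : 0 ≤ v) (hqv : Q v = v) : (a - Q a) ⊓ v = 0 := by
  set t := (a - Q a) ⊓ v with htdef
  have ht0 : 0 ≤ t := le_inf (sub_nonneg.2 (hp a ha).2) hv
  have hqt : Q t = t := q_ideal Q hp ht0 inf_le_right hqv
  have h1 : Q t ≤ Q (a - Q a) := q_mono Q hp inf_le_left
  have h2 : Q (a - Q a) = 0 := by
    rw [map_sub]
    have h := LinearMap.congr_fun hi a
    rw [LinearMap.comp_apply] at h
    rw [h, sub_self]
  rw [h2, hqt] at h1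
  exact le_antisymm h1 ht0

private lemma inf_add_le (s t v : X) (hs : 0 ≤ s) (ht : 0 ≤ t) (hv : 0 ≤ v) :
    (s + t) ⊓ v ≤ s ⊓ v + t ⊓ v := by
  have key : s ⊓ v + t ⊓ v = ((s + t) ⊓ (v + t)) ⊓ ((s + v) ⊓ (v + v)) := by
    rw [add_inf, inf_add, inf_add]
  rw [key]
  refine le_inf (le_inf inf_le_left (inf_le_right.trans (le_add_of_nonneg_right ht)))
    (le_inf (inf_le_right.trans (le_add_of_nonneg_left hs))
      (inf_le_right.trans (le_add_of_nonneg_left hv)))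

private lemma inf_le_q_inf (Q : X →ₗ[ℝ] X) (hi : Q ∘ₗ Q = Q)
    (hp : ∀ x : X, 0 ≤ x → 0 ≤ Q x ∧ Q x ≤ x)
    {a v : X} (ha : 0 ≤ a) (hv : 0 ≤ v) (hqv : Q v = v) : a ⊓ v ≤ Q a ⊓ v := by
  have hdecomp : a = Q a + (a - Q a) := by abel
  calc a ⊓ v = (Q a + (a - Q a)) ⊓ v := by rw [← hdecomp]
    _ ≤ Q a ⊓ v + (a - Q a) ⊓ v :=
        inf_add_le _ _ _ (hp a ha).1 (sub_nonneg.2 (hp a ha).2) hv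
    _ = Q a ⊓ v := by rw [q_compl_disj Q hi hp ha hv hqv, add_zero]

private lemma q_abs (Q : X →ₗ[ℝ] X) (hp : ∀ x : X, 0 ≤ x → 0 ≤ Q x ∧ Q x ≤ x)
    (y : X) : Q |y| = |Q y| := by
  have hdisj : Q y⁺ ⊓ Q y⁻ = 0 := by
    refine le_antisymm ?_ (le_inf (hp _ (posPart_nonneg y)).1 (hp _ (negPart_nonneg y)).1)
    calc Q y⁺ ⊓ Q y⁻ ≤ y⁺ ⊓ y⁻ :=
        inf_le_inf (hp _ (posPart_nonneg y)).2 (hp _ (negPart_nonneg y)).2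
      _ = 0 := posPart_inf_negPart_eq_zero y
  have h1 : Q y = Q y⁺ - Q y⁻ := by rw [← map_sub, posPart_sub_negPart]
  have h2 : |Q y| = (Q y⁻ ⊔ Q y⁺) - (Q y⁻ ⊓ Q y⁺) := by
    rw [sup_sub_inf_eq_abs_sub, h1]
  rw [inf_comm] at h2
  have h3 : Q y⁻ ⊔ Q y⁺ = Q y⁺ + Q y⁻ := by
    have h := inf_add_sup (Q y⁻) (Q y⁺)
    rw [inf_comm, hdisj, zero_add] at h
    rw [h, add_comm]
  rw [h2, hdisj, sub_zero, h3, ← map_add, posPart_add_negPart]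

end Aux

/-- Dense band decomposition criterion: if `(P b)` is a family of band
projections (idempotent, `0 ≤ P b ≤ I`) with pairwise disjoint ranges whose
span is norm dense, then a net un-converges to `x` in `X` iff each projected net
`P b ∘ f` un-converges to `P b x` in the band `range (P b)`. -/
theorem unTendsto_iff_unTendsto_in_each_band
    {X : Type*} [NormedAddCommGroup X] [Lattice X] [HasSolidNorm X] [IsOrderedAddMonoid X]
    [NormedSpace ℝ X] [CompleteSpace X]
    {κ : Type*} (P : κ → X →ₗ[ℝ] X)
    (hidem : ∀ b, (P b) ∘ₗ (P b) = P b)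
    (hpos : ∀ b, ∀ x : X, 0 ≤ x → 0 ≤ P b x ∧ P b x ≤ x)
    (hdisj : ∀ b c, b ≠ c → ∀ x y : X, |P b x| ⊓ |P c y| = 0)
    (hdense : closure ((⨆ b, LinearMap.range (P b) : Submodule ℝ X) : Set X) = Set.univ)
    {ι : Type*} (l : Filter ι) (f : ι → X) (x : X) :
    UnTendsto f l x ↔
      ∀ b, ∀ u ∈ LinearMap.range (P b), 0 ≤ u →
        Tendsto (fun i => ‖|P b (f i) - P b x| ⊓ u‖) l (𝓝 0) := by
  constructor
  · -- forward direction
    intro h b u hu hu0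
    refine squeeze_zero (fun i => norm_nonneg _) (fun i => ?_) (h u hu0)
    have habs : |P b (f i) - P b x| ≤ |f i - x| := by
      rw [← map_sub, ← q_abs (P b) (hpos b)]
      exact (hpos b _ (abs_nonneg _)).2
    exact norm_mono_nonneg (le_inf (abs_nonneg _) hu0) (inf_le_inf habs le_rfl)
  · -- backward direction
    intro h u hu0
    rw [NormedAddCommGroup.tendsto_nhds_zero]
    intro ε hε
    -- approximate u by an element of the span of the bands
    have humem : u ∈ closure ((⨆ b, LinearMap.range (P b) : Submodule ℝ X) : Set X) := by
      rw [hdense]; trivial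
    obtain ⟨w, hwmem, hwdist⟩ := Metric.mem_closure_iff.1 humem (ε / 2) (half_pos hε)
    rw [dist_eq_norm] at hwdist
    -- main claim: for every w in the span, the truncated norms tend to 0
    have hwmem' : w ∈ (⨆ b, LinearMap.range (P b) : Submodule ℝ X) := hwmem
    have T : Tendsto (fun i => ‖|f i - x| ⊓ |w|‖) l (𝓝 0) := by
      refine Submodule.iSup_induction (motive := fun w =>
        Tendsto (fun i => ‖|f i - x| ⊓ |w|‖) l (𝓝 0))
        (fun b => LinearMap.range (P b)) hwmem' ?_ ?_ ?_
      · rintro b z ⟨z', rfl⟩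
        show Tendsto (fun i => ‖|f i - x| ⊓ |P b z'|‖) l (𝓝 0)
        have hqz : P b (P b z') = P b z' := by
          have hh := LinearMap.congr_fun (hidem b) z'
          rwa [LinearMap.comp_apply] at hh
        have hv : P b |P b z'| = |P b z'| := by rw [q_abs (P b) (hpos b), hqz]
        refine squeeze_zero (fun i => norm_nonneg _) (fun i => ?_)
          (h b |P b z'| ⟨|P b z'|, hv⟩ (abs_nonneg _))
        have key : |f i - x| ⊓ |P b z'| ≤ |P b (f i) - P b x| ⊓ |P b z'| := by
          have h1 := inf_le_q_inf (P b) (hidem b) (hpos b)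
            (abs_nonneg (f i - x)) (abs_nonneg (P b z')) hv
          rwa [q_abs (P b) (hpos b), map_sub] at h1
        exact norm_mono_nonneg (le_inf (abs_nonneg _) (abs_nonneg _)) key
      · show Tendsto (fun i => ‖|f i - x| ⊓ |(0:X)|‖) l (𝓝 0)
        have : (fun i => ‖|f i - x| ⊓ |(0:X)|‖) = fun _ => 0 := by
          funext i
          rw [abs_zero, inf_eq_right.2 (abs_nonneg _), norm_zero]
        rw [this]; exact tendsto_const_nhds
      · intro w₁ w₂ T1 T2
        show Tendsto (fun i => ‖|f i - x| ⊓ |w₁ + w₂|‖) l (𝓝 0)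
        replace T1 : Tendsto (fun i => ‖|f i - x| ⊓ |w₁|‖) l (𝓝 0) := T1
        replace T2 : Tendsto (fun i => ‖|f i - x| ⊓ |w₂|‖) l (𝓝 0) := T2
        have T3 := T1.add T2
        rw [add_zero] at T3
        refine squeeze_zero (fun i => norm_nonneg _) (fun i => ?_) T3
        have key : |f i - x| ⊓ |w₁ + w₂| ≤ |f i - x| ⊓ |w₁| + |f i - x| ⊓ |w₂| := by
          calc |f i - x| ⊓ |w₁ + w₂| ≤ |f i - x| ⊓ (|w₁| + |w₂|) :=
              inf_le_inf le_rfl (abs_add_le _ _)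
            _ = (|w₁| + |w₂|) ⊓ |f i - x| := inf_comm _ _
            _ ≤ |w₁| ⊓ |f i - x| + |w₂| ⊓ |f i - x| :=
              inf_add_le _ _ _ (abs_nonneg _) (abs_nonneg _) (abs_nonneg _)
            _ = |f i - x| ⊓ |w₁| + |f i - x| ⊓ |w₂| := by rw [inf_comm, inf_comm |w₂| _]
        calc ‖|f i - x| ⊓ |w₁ + w₂|‖ ≤ ‖|f i - x| ⊓ |w₁| + |f i - x| ⊓ |w₂|‖ :=
            norm_mono_nonneg (le_inf (abs_nonneg _) (abs_nonneg _)) key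
          _ ≤ ‖|f i - x| ⊓ |w₁|‖ + ‖|f i - x| ⊓ |w₂|‖ := norm_add_le _ _
    -- now conclude
    filter_upwards [T.eventually_lt_const (half_pos hε)] with i hi
    set a := |f i - x| with ha
    set v := |w| ⊓ u with hv
    have hvu : v ≤ u := inf_le_right
    have hv0 : 0 ≤ v := le_inf (abs_nonneg _) hu0
    have h1 : a ⊓ u ≤ a ⊓ v + (u - v) := by
      rw [← sub_le_iff_le_add]
      calc a ⊓ u - (u - v) = (a - (u - v)) ⊓ (u - (u - v)) := inf_sub _ _ _
        _ = (a - (u - v)) ⊓ v := by rw [sub_sub_cancel]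
        _ ≤ a ⊓ v := inf_le_inf (sub_le_self _ (sub_nonneg.2 hvu)) le_rfl
    have h2 : ‖a ⊓ u‖ ≤ ‖a ⊓ v‖ + ‖u - v‖ :=
      (norm_mono_nonneg (le_inf (abs_nonneg _) hu0) h1).trans (norm_add_le _ _)
    have h3 : ‖a ⊓ v‖ ≤ ‖a ⊓ |w|‖ :=
      norm_mono_nonneg (le_inf (abs_nonneg _) hv0) (inf_le_inf le_rfl inf_le_left)
    have h4 : ‖u - v‖ ≤ ‖u - w‖ := by
      have hle : u - v ≤ |u - w| := by
        have : u - v = (u - |w|) ⊔ (u - u) := sub_inf _ _ _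
        rw [this, sub_self]
        refine sup_le ?_ (abs_nonneg _)
        calc u - |w| ≤ u - w := sub_le_sub_left (le_abs_self w) u
          _ ≤ |u - w| := le_abs_self _
      calc ‖u - v‖ ≤ ‖|u - w|‖ :=
          norm_mono_nonneg (sub_nonneg.2 hvu) hle
        _ = ‖u - w‖ := norm_abs_eq_norm _
    have : ‖a ⊓ u‖ < ε := by
      calc ‖a ⊓ u‖ ≤ ‖a ⊓ v‖ + ‖u - v‖ := h2
        _ ≤ ‖a ⊓ |w|‖ + ‖u - w‖ := add_le_add h3 h4
        _ < ε / 2 + ε / 2 := add_lt_add hi hwdist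
        _ = ε := add_halves ε
    rwa [Real.norm_of_nonneg (norm_nonneg _)]
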